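/- Let ψ : ℕ → ℝ be concave (ψ(k+1) - ψ(k) nonincreasing) and increasing with ψ(0) = 0, and suppose a box has cost c > 0 and prize X ∈ {0,1} with P(X = 1) = p. Given that k prizes of value 1 have already been found, the generalized reservation value of the box equals max{0, (w_{k+1} - c/p)/(w_{k+1} - w_{k+2})}, where w_j = ψ(j) - ψ(j-1) (assuming w_{k+1} > w_{k+2}). -/

import Mathlib

/-- Marginal utility increments `w j = ψ(j) - ψ(j-1)`. -/
noncomputable def wInc (ψ : ℕ → ℝ) (j : ℕ) : ℝ := ψ j - ψ (j - 1)

/-- Example 1: with `ψ` concave increasing, `ψ(0)=0`, a box of cost `c > 0` and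
Bernoulli(`p`) prize, and `k` unit prizes already found, the generalized
reservation value — the least `y ≥ 0` such that
`Σw + w_{k+1}y ≥ -c + Σw + w_{k+1}y + p((1-y)w_{k+1} + w_{k+2}y)` — equals
`max 0 ((w_{k+1} - c/p)/(w_{k+1} - w_{k+2}))`. -/
theorem stmt_13 (ψ : ℕ → ℝ) (hψ0 : ψ 0 = 0) (hmono : StrictMono ψ)
    (hconc : ∀ k : ℕ, ψ (k + 2) - ψ (k + 1) ≤ ψ (k + 1) - ψ k)
    (c p : ℝ) (hc : 0 < c) (hp : 0 < p) (hp1 : p ≤ 1) (k : ℕ)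
    (hw : wInc ψ (k + 2) < wInc ψ (k + 1)) :
    IsLeast {y : ℝ | 0 ≤ y ∧
        (∑ j ∈ Finset.range k, wInc ψ (j + 1)) + wInc ψ (k + 1) * y ≥
          -c + ((∑ j ∈ Finset.range k, wInc ψ (j + 1)) + wInc ψ (k + 1) * y) +
            p * ((1 - y) * wInc ψ (k + 1) + wInc ψ (k + 2) * y)}
      (max 0 ((wInc ψ (k + 1) - c / p) / (wInc ψ (k + 1) - wInc ψ (k + 2)))) := by
  set w1 := wInc ψ (k + 1)
  set w2 := wInc ψ (k + 2)
  have hd : 0 < w1 - w2 := sub_pos.mpr hw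
  set a := (w1 - c / p) / (w1 - w2) with ha
  constructor
  · refine ⟨le_max_left _ _, ?_⟩
    have h1 : a ≤ max 0 a := le_max_right _ _
    have h2 : w1 - c / p ≤ max 0 a * (w1 - w2) := by
      rw [ha] at h1
      calc w1 - c / p = (w1 - c / p) / (w1 - w2) * (w1 - w2) := by
            field_simp
        _ ≤ max 0 a * (w1 - w2) := by
            exact mul_le_mul_of_nonneg_right h1 hd.le
    have hcp : c / p * p = c := div_mul_cancel₀ c hp.ne'
    nlinarith [mul_le_mul_of_nonneg_left h2 hp.le]
  · rintro y ⟨hy0, hy⟩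
    refine max_le hy0 ?_
    rw [ha, div_le_iff₀ hd]
    have hcp : c / p * p = c := div_mul_cancel₀ c hp.ne'
    nlinarith [mul_le_mul_of_nonneg_left (le_of_lt hd) hy0]
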